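/- Let η > 0, d > 0, k₀ > 0, and n_eff ∈ ℝ. Then lim_{Δ→0⁺} 2η·cos²((n_eff/2)·k₀·Δ) / ( (d² + Δ²/4)·(1 + sin(k₀·Δ)/(k₀·Δ)) ) = η/d². -/

import Mathlib

open Filter

lemma sin_div_self_tendsto :
    Tendsto (fun x : ℝ => Real.sin x / x) (nhdsWithin 0 (Set.Ioi 0)) (nhds 1) := by
  have h : HasDerivAt Real.sin 1 0 := by simpa using Real.hasDerivAt_sin 0
  have := hasDerivAt_iff_tendsto_slope.mp h
  have h2 : Tendsto (slope Real.sin 0) (nhdsWithin 0 (Set.Ioi 0)) (nhds 1) :=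
    this.mono_left (nhdsWithin_mono _ (by intro x hx; simp [Set.mem_Ioi] at hx ⊢; exact ne_of_gt hx))
  refine h2.congr' ?_
  filter_upwards [self_mem_nhdsWithin] with x hx
  rw [slope_def_field]
  simp

/-- Remark 4: as the spacing `Δ → 0⁺`, the mutual-coupling-aware array gain of
two pinching antennas converges to `η/d²`. -/
theorem array_gain_mutual_coupling_limit
    (η d k₀ neff : ℝ) (hη : 0 < η) (hd : 0 < d) (hk : 0 < k₀) :
    Tendsto
      (fun Δ : ℝ =>
        2 * η * Real.cos (neff / 2 * k₀ * Δ) ^ 2 /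
          ((d ^ 2 + Δ ^ 2 / 4) * (1 + Real.sin (k₀ * Δ) / (k₀ * Δ))))
      (nhdsWithin 0 (Set.Ioi 0)) (nhds (η / d ^ 2)) := by
  have hmap : Tendsto (fun Δ : ℝ => k₀ * Δ) (nhdsWithin 0 (Set.Ioi 0))
      (nhdsWithin 0 (Set.Ioi 0)) := by
    refine tendsto_nhdsWithin_iff.2 ⟨?_, ?_⟩
    · exact (((continuous_const.mul continuous_id).tendsto' 0 0 (by simp)).mono_left
        nhdsWithin_le_nhds)
    · filter_upwards [self_mem_nhdsWithin] with x hx using mul_pos hk hx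
  have hsin : Tendsto (fun Δ : ℝ => Real.sin (k₀ * Δ) / (k₀ * Δ))
      (nhdsWithin 0 (Set.Ioi 0)) (nhds 1) := sin_div_self_tendsto.comp hmap
  have hnum : Tendsto (fun Δ : ℝ => 2 * η * Real.cos (neff / 2 * k₀ * Δ) ^ 2)
      (nhdsWithin 0 (Set.Ioi 0)) (nhds (2 * η)) := by
    have : Continuous (fun Δ : ℝ => 2 * η * Real.cos (neff / 2 * k₀ * Δ) ^ 2) := by
      continuity
    have := this.tendsto' 0 (2 * η) (by simp)
    exact this.mono_left nhdsWithin_le_nhds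
  have hden : Tendsto (fun Δ : ℝ => (d ^ 2 + Δ ^ 2 / 4) * (1 + Real.sin (k₀ * Δ) / (k₀ * Δ)))
      (nhdsWithin 0 (Set.Ioi 0)) (nhds (d ^ 2 * 2)) := by
    have h1 : Tendsto (fun Δ : ℝ => d ^ 2 + Δ ^ 2 / 4) (nhdsWithin 0 (Set.Ioi 0))
        (nhds (d ^ 2)) := by
      have : Continuous (fun Δ : ℝ => d ^ 2 + Δ ^ 2 / 4) := by continuity
      exact (this.tendsto' 0 (d ^ 2) (by simp)).mono_left nhdsWithin_le_nhds
    have h2 := (tendsto_const_nhds (x := (1:ℝ))).add hsin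
    norm_num at h2
    exact h1.mul h2
  have := hnum.div hden (by positivity)
  rw [Pi.div_def] at this
  convert this using 2
  field_simp
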